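/- The join operator ⊔ on the symbolic lattice L yields the least upper bound: for all l₁, l₂, u ∈ L, if l₁ ⊑ u and l₂ ⊑ u, then l₁ ⊔ l₂ ⊑ u. -/
import Mathlib


inductive SymExpr (P U B F : Type*) where
  | bot : SymExpr P U B F
  | top : SymExpr P U B F
  | prim : P → SymExpr P U B F
  | unop : U → SymExpr P U B F → SymExpr P U B F
  | binop : B → SymExpr P U B F → SymExpr P U B F → SymExpr P U B F
  | fn : F → List (SymExpr P U B F) → SymExpr P U B F
  | phi : List (SymExpr P U B F) → SymExpr P U B F

namespace SymExpr

variable {P U B F : Type*}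

/-- The partial order `⊑` on the symbolic lattice. -/
inductive Le : SymExpr P U B F → SymExpr P U B F → Prop where
  | bot (l) : Le .bot l
  | top (l) : Le l .top
  | prim (p : P) : Le (.prim p) (.prim p)
  | unop {l l'} (u : U) : Le l l' → Le (.unop u l) (.unop u l')
  | binop {l₁ l₂ l₁' l₂'} (b : B) : Le l₁ l₁' → Le l₂ l₂' →
      Le (.binop b l₁ l₂) (.binop b l₁' l₂')
  | fn {ls ls'} (f : F) : List.Forall₂ Le ls ls' → Le (.fn f ls) (.fn f ls')
  | phi {ls ls'} : List.Forall₂ Le ls ls' → Le (.phi ls) (.phi ls')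

attribute [local instance] Classical.propDecidable

mutual
noncomputable def join : SymExpr P U B F → SymExpr P U B F → SymExpr P U B F
  | .bot, l => l
  | l, .bot => l
  | .prim p, .prim p' => if p = p' then .prim p else .top
  | .unop u l, .unop u' l' => if u = u' then .unop u (join l l') else .top
  | .binop b l₁ l₂, .binop b' l₁' l₂' =>
      if b = b' then .binop b (join l₁ l₁') (join l₂ l₂') else .top
  | .fn f ls, .fn f' ls' =>
      if f = f' ∧ ls.length = ls'.length then .fn f (joinList ls ls') else .top
  | .phi ls, .phi ls' =>
      if ls.length = ls'.length then .phi (joinList ls ls') else .top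
  | _, _ => .top

noncomputable def joinList : List (SymExpr P U B F) → List (SymExpr P U B F) → List (SymExpr P U B F)
  | l :: ls, l' :: ls' => join l l' :: joinList ls ls'
  | _, _ => []
end

mutual
noncomputable def meet : SymExpr P U B F → SymExpr P U B F → SymExpr P U B F
  | .top, l => l
  | l, .top => l
  | .prim p, .prim p' => if p = p' then .prim p else .bot
  | .unop u l, .unop u' l' => if u = u' then .unop u (meet l l') else .bot
  | .binop b l₁ l₂, .binop b' l₁' l₂' =>
      if b = b' then .binop b (meet l₁ l₁') (meet l₂ l₂') else .bot
  | .fn f ls, .fn f' ls' =>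
      if f = f' ∧ ls.length = ls'.length then .fn f (meetList ls ls') else .bot
  | .phi ls, .phi ls' =>
      if ls.length = ls'.length then .phi (meetList ls ls') else .bot
  | _, _ => .bot

noncomputable def meetList : List (SymExpr P U B F) → List (SymExpr P U B F) → List (SymExpr P U B F)
  | l :: ls, l' :: ls' => meet l l' :: meetList ls ls'
  | _, _ => []
end

mutual
def depth : SymExpr P U B F → ℕ
  | .bot => 0
  | .top => 0
  | .prim _ => 0
  | .unop _ l => 1 + depth l
  | .binop _ l₁ l₂ => 1 + max (depth l₁) (depth l₂)
  | .fn _ ls => 1 + depthList ls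
  | .phi ls => 1 + depthList ls

def depthList : List (SymExpr P U B F) → ℕ
  | [] => 0
  | l :: ls => max (depth l) (depthList ls)
end

/-- The widening truncation `T_i`. -/
def trunc : ℕ → SymExpr P U B F → SymExpr P U B F
  | _, .bot => .bot
  | _, .top => .top
  | _, .prim p => .prim p
  | 0, .unop _ _ => .top
  | 0, .binop _ _ _ => .top
  | 0, .fn _ _ => .top
  | 0, .phi _ => .top
  | i + 1, .unop u l => .unop u (trunc i l)
  | i + 1, .binop b l₁ l₂ => .binop b (trunc i l₁) (trunc i l₂)
  | i + 1, .fn f ls => .fn f (ls.map (fun l => trunc i l))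
  | i + 1, .phi ls => .phi (ls.map (fun l => trunc i l))

end SymExpr


mutual
theorem SymExpr.join_le_aux {P U B F : Type*} : ∀ (l₁ l₂ u : SymExpr P U B F),
    l₁.Le u → l₂.Le u → (l₁.join l₂).Le u
  | _, l₂, u, .bot _, h₂ => by
      cases l₂ <;> cases h₂ <;> first | exact .top _ | (unfold SymExpr.join; assumption) | (unfold SymExpr.join; constructor <;> assumption)
  | l₁, _, u, h₁, .bot _ => by
      cases l₁ <;> cases h₁ <;> first | exact .top _ | (unfold SymExpr.join; assumption) | (unfold SymExpr.join; constructor <;> assumption)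
  | _, _, _, .top _, _ => .top _
  | _, _, _, .prim p, h₂ => by
      cases h₂ with
      | bot => unfold SymExpr.join; exact .prim p
      | prim => unfold SymExpr.join; rw [if_pos rfl]; exact .prim p
  | _, _, _, .unop u hu, h₂ => by
      cases h₂ with
      | bot => unfold SymExpr.join; exact .unop u hu
      | unop _ hu' => unfold SymExpr.join; rw [if_pos rfl]; exact .unop u (SymExpr.join_le_aux _ _ _ hu hu')
  | _, _, _, .binop b h1 h2, h₂ => by
      cases h₂ with
      | bot => unfold SymExpr.join; exact .binop b h1 h2
      | binop _ h1' h2' =>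
          unfold SymExpr.join; rw [if_pos rfl]
          exact .binop b (SymExpr.join_le_aux _ _ _ h1 h1') (SymExpr.join_le_aux _ _ _ h2 h2')
  | _, _, _, .fn f hls, h₂ => by
      cases h₂ with
      | bot => unfold SymExpr.join; exact .fn f hls
      | fn _ hls' =>
          unfold SymExpr.join
          rw [if_pos ⟨rfl, hls.length_eq.trans hls'.length_eq.symm⟩]
          exact .fn f (SymExpr.joinList_le_aux _ _ _ hls hls')
  | _, _, _, .phi hls, h₂ => by
      cases h₂ with
      | bot => unfold SymExpr.join; exact .phi hls
      | phi hls' =>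
          unfold SymExpr.join
          rw [if_pos (hls.length_eq.trans hls'.length_eq.symm)]
          exact .phi (SymExpr.joinList_le_aux _ _ _ hls hls')
termination_by l₁ l₂ u _ _ => sizeOf u

theorem SymExpr.joinList_le_aux {P U B F : Type*} :
    ∀ (ls ls' us : List (SymExpr P U B F)),
    List.Forall₂ SymExpr.Le ls us → List.Forall₂ SymExpr.Le ls' us →
    List.Forall₂ SymExpr.Le (SymExpr.joinList ls ls') us
  | _, _, _, .nil, .nil => by unfold SymExpr.joinList; exact .nil
  | _, _, _, .cons h hs, .cons h' hs' => by
      unfold SymExpr.joinList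
      exact .cons (SymExpr.join_le_aux _ _ _ h h') (SymExpr.joinList_le_aux _ _ _ hs hs')
termination_by ls ls' us _ _ => sizeOf us
end

/-- the join is the least upper bound. -/
theorem SymExpr.join_le {P U B F : Type*} (l₁ l₂ u : SymExpr P U B F)
    (h₁ : l₁.Le u) (h₂ : l₂.Le u) : (l₁.join l₂).Le u :=
  SymExpr.join_le_aux l₁ l₂ u h₁ h₂
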